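/- Marginal interaction-effect step (used in the proof of Lemma 5): under the treatment model, IV independence, and the orthogonality conditions Cov(ϑ_az(V), α_z(V)) = 0 and Cov(ϑ_az(V), α_u(V)) = 0, it holds that E[(B − E[B])·A·B·ϑ_az(V)] = E[(B − E[B])·A·B]·E[ϑ_az(V)]. -/

import Mathlib

open MeasureTheory ProbabilityTheory

/-- Covariance of two real random variables: `Cov(X,Z) = E[XZ] - E[X]·E[Z]`. -/
noncomputable def covE {Ω : Type*} [MeasurableSpace Ω] (μ : Measure Ω) (X Z : Ω → ℝ) : ℝ :=
  (∫ ω, X ω * Z ω ∂μ) - (∫ ω, X ω ∂μ) * (∫ ω, Z ω ∂μ)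

private lemma int_of_bdd {Ω : Type*} [MeasurableSpace Ω] {μ : Measure Ω} [IsProbabilityMeasure μ]
    {f : Ω → ℝ} (hf : Measurable f) {C : ℝ} (h : ∀ ω, |f ω| ≤ C) : Integrable f μ :=
  (integrable_const C).mono' hf.aestronglyMeasurable (ae_of_all _ fun ω => by
    simpa [Real.norm_eq_abs] using h ω)

/-- Tower-property step: for `g` bounded and `m`-measurable,
`∫ g·A = ∫ g·h` where `h` is (a version of) `E[A|m]`. -/
private lemma tower_step {Ω : Type*} {m : MeasurableSpace Ω} [mΩ : MeasurableSpace Ω]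
    (hm : m ≤ mΩ) {μ : Measure Ω} [IsProbabilityMeasure μ]
    {A g h : Ω → ℝ} (hAint : Integrable A μ)
    (hg : Measurable[m] g) {C : ℝ} (hgC : ∀ ω, |g ω| ≤ C)
    (htreat : μ[A|m] =ᵐ[μ] h) :
    ∫ ω, g ω * A ω ∂μ = ∫ ω, g ω * h ω ∂μ := by
  haveI : SigmaFinite (μ.trim hm) := by
    haveI : IsFiniteMeasure (μ.trim hm) := isFiniteMeasure_trim hm
    infer_instance
  have hgmul : μ[(fun ω => g ω * A ω)|m] =ᵐ[μ] fun ω => g ω * (μ[A|m]) ω := by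
    have := condExp_stronglyMeasurable_mul_of_bound hm hg.stronglyMeasurable hAint C
      (ae_of_all _ fun ω => by simpa [Real.norm_eq_abs] using hgC ω)
    exact this
  calc ∫ ω, g ω * A ω ∂μ = ∫ ω, (μ[(fun ω => g ω * A ω)|m]) ω ∂μ := (integral_condExp hm).symm
    _ = ∫ ω, g ω * (μ[A|m]) ω ∂μ := integral_congr_ae hgmul
    _ = ∫ ω, g ω * h ω ∂μ := by
        refine integral_congr_ae ?_
        filter_upwards [htreat] with ω hω
        rw [hω]

/-- Marginal interaction-effect step (used in the proof of Lemma 5):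
`E[(B − E[B])·A·B·ϑ_az(V)] = E[(B − E[B])·A·B]·E[ϑ_az(V)]`. -/
theorem marginal_interaction_effect_step
    {Ω 𝒱 : Type*} [MeasurableSpace Ω] [MeasurableSpace 𝒱]
    (μ : Measure Ω) [IsProbabilityMeasure μ]
    (V : Ω → 𝒱) (A B : Ω → ℝ)
    (hV : Measurable V) (hA : Measurable A) (hB : Measurable B)
    (hA01 : ∀ ω, A ω = 0 ∨ A ω = 1) (hB01 : ∀ ω, B ω = 0 ∨ B ω = 1)
    (αz αu : 𝒱 → ℝ) (hαzm : Measurable αz) (hαum : Measurable αu)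
    (hαzb : ∃ C, ∀ x, |αz x| ≤ C) (hαub : ∃ C, ∀ x, |αu x| ≤ C)
    (htreat : μ[A | MeasurableSpace.comap (fun ω => (B ω, V ω)) inferInstance]
        =ᵐ[μ] fun ω => αz (V ω) * B ω + αu (V ω))
    (hindep : IndepFun B V μ)
    (ϑaz : 𝒱 → ℝ) (hϑazm : Measurable ϑaz) (hϑazb : ∃ C, ∀ x, |ϑaz x| ≤ C)
    (horth1 : covE μ (fun x => ϑaz (V x)) (fun x => αz (V x)) = 0)
    (horth2 : covE μ (fun x => ϑaz (V x)) (fun x => αu (V x)) = 0) :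
    (∫ ω, (B ω - ∫ x, B x ∂μ) * A ω * B ω * ϑaz (V ω) ∂μ)
      = (∫ ω, (B ω - ∫ x, B x ∂μ) * A ω * B ω ∂μ) * (∫ ω, ϑaz (V ω) ∂μ) := by
  obtain ⟨Cz, hCz⟩ := hαzb
  obtain ⟨Cu, hCu⟩ := hαub
  obtain ⟨Ct, hCt⟩ := hϑazb
  set b : ℝ := ∫ x, B x ∂μ with hb
  have hBV : Measurable (fun ω => (B ω, V ω)) := hB.prodMk hV
  have hm : MeasurableSpace.comap (fun ω => (B ω, V ω)) inferInstance ≤ _ := hBV.comap_le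
  have hBVm : Measurable[MeasurableSpace.comap (fun ω => (B ω, V ω)) inferInstance]
      (fun ω => (B ω, V ω)) := Measurable.of_comap_le le_rfl
  have hBm : Measurable[MeasurableSpace.comap (fun ω => (B ω, V ω)) inferInstance] B :=
    measurable_fst.comp hBVm
  have hVm : Measurable[MeasurableSpace.comap (fun ω => (B ω, V ω)) inferInstance] V :=
    measurable_snd.comp hBVm
  have hA1 : ∀ ω, |A ω| ≤ 1 := fun ω => by rcases hA01 ω with h | h <;> simp [h]
  have hB1 : ∀ ω, |B ω| ≤ 1 := fun ω => by rcases hB01 ω with h | h <;> simp [h]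
  have hAint : Integrable A μ := int_of_bdd hA hA1
  have hBB : ∀ ω, B ω * B ω = B ω := fun ω => by rcases hB01 ω with h | h <;> simp [h]
  -- independence step
  have indep_step : ∀ (h : 𝒱 → ℝ), Measurable h → (∃ C, ∀ y, |h y| ≤ C) →
      ∫ ω, B ω * h (V ω) ∂μ = b * ∫ ω, h (V ω) ∂μ := by
    intro h hh hC
    have hi : IndepFun B (fun ω => h (V ω)) μ := hindep.comp measurable_id hh
    obtain ⟨C, hC⟩ := hC
    exact hi.integral_fun_mul_eq_mul_integral (int_of_bdd hB hB1).aestronglyMeasurable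
      (int_of_bdd (hh.comp hV) (fun ω => hC (V ω))).aestronglyMeasurable
  -- bounds
  have hg1b : ∀ ω, |(B ω - b) * B ω * ϑaz (V ω)| ≤ (1 + |b|) * 1 * |Ct| := by
    intro ω
    rw [abs_mul, abs_mul]
    have h1 : |B ω - b| ≤ 1 + |b| := (abs_sub _ _).trans (by gcongr; exact hB1 ω)
    exact mul_le_mul (mul_le_mul h1 (hB1 ω) (abs_nonneg _) (by positivity))
      ((hCt (V ω)).trans (le_abs_self _)) (abs_nonneg _) (by positivity)
  have hg2b : ∀ ω, |(B ω - b) * B ω| ≤ (1 + |b|) * 1 := by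
    intro ω
    rw [abs_mul]
    have h1 : |B ω - b| ≤ 1 + |b| := (abs_sub _ _).trans (by gcongr; exact hB1 ω)
    exact mul_le_mul h1 (hB1 ω) (abs_nonneg _) (by positivity)
  -- tower steps
  have L1 : (∫ ω, (B ω - b) * A ω * B ω * ϑaz (V ω) ∂μ)
      = ∫ ω, ((B ω - b) * B ω * ϑaz (V ω)) * (αz (V ω) * B ω + αu (V ω)) ∂μ := by
    rw [← tower_step (g := fun ω => (B ω - b) * B ω * ϑaz (V ω)) hm hAint
      (((hBm.sub measurable_const).mul hBm).mul (hϑazm.comp hVm)) hg1b htreat]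
    exact integral_congr_ae (ae_of_all _ fun ω => by ring)
  have R1 : (∫ ω, (B ω - b) * A ω * B ω ∂μ)
      = ∫ ω, ((B ω - b) * B ω) * (αz (V ω) * B ω + αu (V ω)) ∂μ := by
    rw [← tower_step (g := fun ω => (B ω - b) * B ω) hm hAint ((hBm.sub measurable_const).mul hBm) hg2b htreat]
    exact integral_congr_ae (ae_of_all _ fun ω => by ring)
  -- pointwise simplification using B² = B
  have L2 : (∫ ω, ((B ω - b) * B ω * ϑaz (V ω)) * (αz (V ω) * B ω + αu (V ω)) ∂μ)
      = ∫ ω, (1 - b) * (B ω * ((αz (V ω) + αu (V ω)) * ϑaz (V ω))) ∂μ := by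
    refine integral_congr_ae (ae_of_all _ fun ω => ?_)
    have h2 := hBB ω
    linear_combination (ϑaz (V ω) * (αz (V ω) * B ω + (1 - b) * αz (V ω) + αu (V ω))) * h2
  have R2 : (∫ ω, ((B ω - b) * B ω) * (αz (V ω) * B ω + αu (V ω)) ∂μ)
      = ∫ ω, (1 - b) * (B ω * (αz (V ω) + αu (V ω))) ∂μ := by
    refine integral_congr_ae (ae_of_all _ fun ω => ?_)
    have h2 := hBB ω
    linear_combination (αz (V ω) * B ω + (1 - b) * αz (V ω) + αu (V ω)) * h2
  -- orthogonality
  have bzt : ∀ ω, |ϑaz (V ω) * αz (V ω)| ≤ |Ct| * |Cz| := fun ω => by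
    rw [abs_mul]
    exact mul_le_mul ((hCt _).trans (le_abs_self _))
      ((hCz _).trans (le_abs_self _)) (abs_nonneg _) (abs_nonneg _)
  have but : ∀ ω, |ϑaz (V ω) * αu (V ω)| ≤ |Ct| * |Cu| := fun ω => by
    rw [abs_mul]
    exact mul_le_mul ((hCt _).trans (le_abs_self _))
      ((hCu _).trans (le_abs_self _)) (abs_nonneg _) (abs_nonneg _)
  have izt : Integrable (fun ω => ϑaz (V ω) * αz (V ω)) μ :=
    int_of_bdd ((hϑazm.comp hV).mul (hαzm.comp hV)) bzt
  have iut : Integrable (fun ω => ϑaz (V ω) * αu (V ω)) μ :=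
    int_of_bdd ((hϑazm.comp hV).mul (hαum.comp hV)) but
  have horth1' : (∫ ω, ϑaz (V ω) * αz (V ω) ∂μ)
      = (∫ ω, ϑaz (V ω) ∂μ) * (∫ ω, αz (V ω) ∂μ) := by
    have := horth1; unfold covE at this; linarith
  have horth2' : (∫ ω, ϑaz (V ω) * αu (V ω) ∂μ)
      = (∫ ω, ϑaz (V ω) ∂μ) * (∫ ω, αu (V ω) ∂μ) := by
    have := horth2; unfold covE at this; linarith
  have split : (∫ ω, (αz (V ω) + αu (V ω)) * ϑaz (V ω) ∂μ)
      = (∫ ω, ϑaz (V ω) ∂μ) * ((∫ ω, αz (V ω) ∂μ) + (∫ ω, αu (V ω) ∂μ)) := by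
    have h1 : (fun ω => (αz (V ω) + αu (V ω)) * ϑaz (V ω))
        = fun ω => ϑaz (V ω) * αz (V ω) + ϑaz (V ω) * αu (V ω) := by
      funext ω; ring
    rw [h1, integral_add izt iut, horth1', horth2']; ring
  have split2 : (∫ ω, αz (V ω) + αu (V ω) ∂μ)
      = (∫ ω, αz (V ω) ∂μ) + (∫ ω, αu (V ω) ∂μ) :=
    integral_add (int_of_bdd (hαzm.comp hV) (fun ω => hCz (V ω)))
      (int_of_bdd (hαum.comp hV) (fun ω => hCu (V ω)))
  have hbd1 : ∃ C, ∀ y, |(αz y + αu y) * ϑaz y| ≤ C := by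
    refine ⟨(|Cz| + |Cu|) * |Ct|, fun y => ?_⟩
    rw [abs_mul]
    exact mul_le_mul ((abs_add_le _ _).trans (add_le_add ((hCz y).trans (le_abs_self _))
      ((hCu y).trans (le_abs_self _)))) ((hCt y).trans (le_abs_self _)) (abs_nonneg _)
      (by positivity)
  have hbd2 : ∃ C, ∀ y, |αz y + αu y| ≤ C :=
    ⟨|Cz| + |Cu|, fun y => (abs_add_le _ _).trans (add_le_add ((hCz y).trans (le_abs_self _))
      ((hCu y).trans (le_abs_self _)))⟩
  calc (∫ ω, (B ω - b) * A ω * B ω * ϑaz (V ω) ∂μ)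
      = ∫ ω, (1 - b) * (B ω * ((αz (V ω) + αu (V ω)) * ϑaz (V ω))) ∂μ := by rw [L1, L2]
    _ = (1 - b) * ∫ ω, B ω * ((αz (V ω) + αu (V ω)) * ϑaz (V ω)) ∂μ := integral_const_mul _ _
    _ = (1 - b) * (b * ∫ ω, (αz (V ω) + αu (V ω)) * ϑaz (V ω) ∂μ) := by
        rw [indep_step (fun y => (αz y + αu y) * ϑaz y) ((hαzm.add hαum).mul hϑazm) hbd1]
    _ = (1 - b) * (b * ((∫ ω, ϑaz (V ω) ∂μ) * ((∫ ω, αz (V ω) ∂μ) + (∫ ω, αu (V ω) ∂μ)))) := by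
        rw [split]
    _ = ((1 - b) * (b * ((∫ ω, αz (V ω) ∂μ) + (∫ ω, αu (V ω) ∂μ)))) * (∫ ω, ϑaz (V ω) ∂μ) := by
        ring
    _ = (∫ ω, (B ω - b) * A ω * B ω ∂μ) * (∫ ω, ϑaz (V ω) ∂μ) := by
        rw [R1, R2, integral_const_mul, indep_step (fun y => αz y + αu y) (hαzm.add hαum) hbd2, split2]
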